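/- Let B be a set, let n ≥ 2, let l be a positive integer, let m = l/2 with l even, and let α₀, …, α_{n−1} ∈ F(B) each have reduced word of length l. For each i (indices taken modulo n), let k_i denote the number of cancellations in the product α_i·α_{i+1}, i.e. k_i = (2l − |α_i·α_{i+1}|)/2 where |·| denotes reduced word length. If α₀·α₁·⋯·α_{n−1} = 1 and k₀ = k₁ = ⋯ = k_{n−1} = k, then k ≥ m. -/

import Mathlib

set_option maxHeartbeats 1000000

namespace CancelAux

variable {B : Type*} [DecidableEq B]

/-- Two letters that do not cancel. -/
def R (a b : B × Bool) : Prop := b ≠ (a.1, !a.2)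

theorem chain'_reduce (L : List (B × Bool)) : List.Chain' R (FreeGroup.reduce L) := by
  induction L with
  | nil => exact List.isChain_nil
  | cons x L ih =>
    rw [FreeGroup.reduce.cons]
    cases h : FreeGroup.reduce L with
    | nil => exact List.isChain_singleton _
    | cons hd tl =>
      rw [h] at ih
      by_cases hc : x.1 = hd.1 ∧ x.2 = !hd.2
      · simp only [hc, and_self, if_true]
        exact ih.tail
      · simp only [hc, if_false]
        refine List.isChain_cons_cons.mpr ⟨?_, ih⟩
        intro he
        exact hc ⟨by rw [he], by rw [he]; simp⟩

theorem chain'_toWord (x : FreeGroup B) : List.Chain' R x.toWord := by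
  have := chain'_reduce x.toWord
  rwa [FreeGroup.reduce_toWord] at this

theorem reduce_eq_self {L : List (B × Bool)} (h : List.Chain' R L) :
    FreeGroup.reduce L = L := by
  induction L with
  | nil => rfl
  | cons x L ih =>
    rw [FreeGroup.reduce.cons, ih h.tail]
    cases L with
    | nil => rfl
    | cons a L' =>
      have hR : a ≠ (x.1, !x.2) := (List.isChain_cons_cons.mp h).1
      have hcond : ¬(x.1 = a.1 ∧ x.2 = !a.2) := by
        rintro ⟨h1, h2⟩
        exact hR (Prod.ext h1.symm (by rw [h2]; simp))
      simp only [hcond, if_false]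

theorem decomp : ∀ (N : ℕ) (u v : List (B × Bool)), u.length ≤ N →
    List.Chain' R u → List.Chain' R v →
    ∃ p s t, u = p ++ t ∧ v = FreeGroup.invRev t ++ s ∧
      FreeGroup.reduce (u ++ v) = p ++ s := by
  intro N
  induction N with
  | zero =>
    intro u v hlen hu hv
    have hu0 : u = [] := List.eq_nil_of_length_eq_zero (Nat.le_zero.mp hlen)
    subst hu0
    exact ⟨[], v, [], by simp, by simp [FreeGroup.invRev], by simpa using reduce_eq_self hv⟩
  | succ N ih =>
    intro u v hlen hu hv
    by_cases hc : List.Chain' R (u ++ v)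
    · exact ⟨u, v, [], by simp, by simp [FreeGroup.invRev], by rw [reduce_eq_self hc]⟩
    · have hjunc : ¬ ∀ x ∈ u.getLast?, ∀ y ∈ v.head?, R x y := fun hj =>
        hc (List.isChain_append.mpr ⟨hu, hv, hj⟩)
      push_neg at hjunc
      obtain ⟨a, ha, b, hb, hab⟩ := hjunc
      simp only [R, ne_eq, not_not] at hab
      obtain ⟨x, c⟩ := a
      obtain ⟨u', hu'⟩ := List.getLast?_eq_some_iff.mp ha
      have hv' : v = (x, !c) :: v.tail := by
        have := List.eq_cons_of_mem_head? hb
        rwa [hab] at this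
      have hured : List.Chain' R u' := by
        rw [hu'] at hu
        exact (List.isChain_append.mp hu).1
      have hvred : List.Chain' R v.tail := by
        rw [hv'] at hv; exact hv.tail
      have hulen : u'.length ≤ N := by
        have := congrArg List.length hu'
        simp at this
        omega
      obtain ⟨p, s, t', h1, h2, h3⟩ := ih u' v.tail hulen hured hvred
      refine ⟨p, s, t' ++ [(x, c)], ?_, ?_, ?_⟩
      · rw [hu', h1, List.append_assoc]
      · have : FreeGroup.invRev (t' ++ [(x, c)]) = (x, !c) :: FreeGroup.invRev t' := by
          simp [FreeGroup.invRev]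
        rw [this, hv', h2]
        simp
      · have heq : u ++ v = u' ++ (x, c) :: (x, !c) :: v.tail := by
          rw [hu', hv']; simp
        rw [heq, FreeGroup.reduce.Step.eq (FreeGroup.Red.Step.not), h3]

theorem mk_mul_cancel (A C t : List (B × Bool)) :
    FreeGroup.mk (A ++ t) * FreeGroup.mk (FreeGroup.invRev t ++ C) = FreeGroup.mk (A ++ C) := by
  calc FreeGroup.mk (A ++ t) * FreeGroup.mk (FreeGroup.invRev t ++ C)
      = (FreeGroup.mk A * FreeGroup.mk t) *
        ((FreeGroup.mk t)⁻¹ * FreeGroup.mk C) := by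
        rw [← FreeGroup.mul_mk, ← FreeGroup.mul_mk, FreeGroup.inv_mk]
    _ = FreeGroup.mk A * FreeGroup.mk C := by group
    _ = FreeGroup.mk (A ++ C) := FreeGroup.mul_mk

/-- The key induction: if each `αᵢ` splits as `pᵢ ++ tᵢ` with `αᵢ₊₁ = tᵢ⁻¹ ++ sᵢ`,
cancellation `k` with `2k < l`, then the partial product `α₀ ⋯ α_{j-1}` has reduced
word ending in `s (j-2)`. -/
theorem main_claim {n l k : ℕ} (α : Fin n → FreeGroup B)
    (p s t : ℕ → List (B × Bool)) (hkl : k + k < l)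
    (h1 : ∀ i (hi : i < n), (α ⟨i, hi⟩).toWord = p i ++ t i)
    (h2 : ∀ i (hi : i + 1 < n), (α ⟨i + 1, hi⟩).toWord = FreeGroup.invRev (t i) ++ s i)
    (h3 : ∀ i (hi : i + 1 < n),
      FreeGroup.reduce ((α ⟨i, by omega⟩).toWord ++ (α ⟨i + 1, hi⟩).toWord) = p i ++ s i)
    (hpl : ∀ i, i < n → (p i).length + (t i).length = l)
    (htk : ∀ i, i + 1 < n → (t i).length = k) :
    ∀ j, 2 ≤ j → j ≤ n →
      ∃ c, (((List.ofFn α).take j).prod).toWord = c ++ s (j - 2) := by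
  have hPsucc : ∀ (j : ℕ) (hj : j < n),
      ((List.ofFn α).take (j + 1)).prod = ((List.ofFn α).take j).prod * α ⟨j, hj⟩ := by
    intro j hj
    have hj' : j < (List.ofFn α).length := by simp; omega
    rw [List.prod_take_succ _ _ hj']
    congr 1
    simp
  intro j hj2
  induction j, hj2 using Nat.le_induction with
  | base =>
    intro hjn
    have hP2 : ((List.ofFn α).take 2).prod = α ⟨0, by omega⟩ * α ⟨1, by omega⟩ := by
      rw [hPsucc 1 (by omega), hPsucc 0 (by omega)]
      simp
    refine ⟨p 0, ?_⟩
    rw [hP2]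
    have hmul : α ⟨0, by omega⟩ * α ⟨1, by omega⟩ =
        FreeGroup.mk ((α ⟨0, by omega⟩).toWord ++ (α ⟨1, by omega⟩).toWord) := by
      rw [← FreeGroup.mul_mk, FreeGroup.mk_toWord, FreeGroup.mk_toWord]
    rw [hmul, FreeGroup.toWord_mk]
    exact h3 0 (by omega)
  | succ j hj2 ih =>
    intro hjn
    obtain ⟨c, hc⟩ := ih (by omega)
    have hj1n : j - 1 < n := by omega
    have hj2n : j - 2 + 1 < n := by omega
    have hjn' : j < n := by omega
    have hkp : k ≤ (p (j - 1)).length := by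
      have := hpl (j - 1) hj1n
      have := htk (j - 1) (by omega)
      omega
    have hidx : (⟨j - 2 + 1, hj2n⟩ : Fin n) = ⟨j - 1, hj1n⟩ := by
      apply Fin.ext
      simp
      omega
    have hsdrop : s (j - 2) = (p (j - 1)).drop k ++ t (j - 1) := by
      have e1 : FreeGroup.invRev (t (j - 2)) ++ s (j - 2) = p (j - 1) ++ t (j - 1) := by
        rw [← h2 (j - 2) hj2n, hidx, h1 (j - 1) hj1n]
      have e2 : s (j - 2) = List.drop k (FreeGroup.invRev (t (j - 2)) ++ s (j - 2)) :=
        (List.drop_left' (by rw [FreeGroup.invRev_length, htk (j - 2) hj2n])).symm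
      rw [e2, e1, List.drop_append,
        Nat.sub_eq_zero_of_le hkp, List.drop_zero]
    have hq_ne : (p (j - 1)).drop k ≠ [] := by
      intro hnil
      have := congrArg List.length hnil
      simp only [List.length_drop, List.length_nil] at this
      have := hpl (j - 1) hj1n
      have := htk (j - 1) (by omega)
      omega
    have hc' : (((List.ofFn α).take j).prod).toWord =
        (c ++ (p (j - 1)).drop k) ++ t (j - 1) := by
      rw [hc, hsdrop, List.append_assoc]
    have hchain_ps : List.Chain' R (p (j - 1) ++ s (j - 1)) := by
      rw [← h3 (j - 1) (by omega)]
      exact chain'_reduce _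
    have hidx2 : (⟨j - 1 + 1, by omega⟩ : Fin n) = ⟨j, hjn'⟩ := by
      apply Fin.ext
      simp
      omega
    have hα : α ⟨j, hjn'⟩ = FreeGroup.mk (FreeGroup.invRev (t (j - 1)) ++ s (j - 1)) := by
      rw [← h2 (j - 1) (by omega), hidx2, FreeGroup.mk_toWord]
    have hPj : ((List.ofFn α).take j).prod =
        FreeGroup.mk ((c ++ (p (j - 1)).drop k) ++ t (j - 1)) := by
      rw [← hc', FreeGroup.mk_toWord]
    have hPj1 : ((List.ofFn α).take (j + 1)).prod =
        FreeGroup.mk ((c ++ (p (j - 1)).drop k) ++ s (j - 1)) := by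
      rw [hPsucc j hjn', hPj, hα, mk_mul_cancel]
    have hchain_new : List.Chain' R ((c ++ (p (j - 1)).drop k) ++ s (j - 1)) := by
      apply List.isChain_append.mpr
      refine ⟨?_, ?_, ?_⟩
      · have := chain'_toWord (((List.ofFn α).take j).prod)
        rw [hc'] at this
        exact (List.isChain_append.mp this).1
      · exact (List.isChain_append.mp hchain_ps).2.1
      · intro x hx y hy
        have hxq : x ∈ ((p (j - 1)).drop k).getLast? := by
          rwa [List.getLast?_append_of_ne_nil c hq_ne] at hx
        have hxp : x ∈ (p (j - 1)).getLast? := by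
          have e3 := List.getLast?_append_of_ne_nil (List.take k (p (j - 1))) hq_ne
          rw [List.take_append_drop] at e3
          rw [e3]
          exact hxq
        exact (List.isChain_append.mp hchain_ps).2.2 x hxp y hy
    refine ⟨c ++ (p (j - 1)).drop k, ?_⟩
    have hj12 : j + 1 - 2 = j - 1 := by omega
    rw [hj12, hPj1, FreeGroup.toWord_mk, reduce_eq_self hchain_new]

end CancelAux

/-- Let `α₀, …, α_{n-1}` (`n ≥ 2`) be elements of a free group, each with reduced
word of even length `l = 2m > 0`, such that `α₀ ⋯ α_{n-1} = 1` and the number of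
cancellations `kᵢ = (2l − |αᵢ · α_{i+1}|)/2` (indices mod `n`) is the same value
`k` for all `i`. Then `k ≥ m`. -/
theorem cancellations_ge_half_length {B : Type*} [DecidableEq B]
    (n l m k : ℕ) (hn : 2 ≤ n) (hl : 0 < l) (hleven : Even l) (hm : m = l / 2)
    (α : Fin n → FreeGroup B)
    (hlen : ∀ i, (α i).toWord.length = l)
    (hprod : (List.ofFn α).prod = 1)
    (hk : ∀ i : Fin n,
      (2 * l - (α i * α ⟨(i.1 + 1) % n, Nat.mod_lt _ (by omega)⟩).toWord.length) / 2
        = k) :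
    m ≤ k := by
  by_contra hmk
  push_neg at hmk
  have hn0 : 0 < n := by omega
  have hl2 : l = 2 * m := by
    obtain ⟨r, hr⟩ := hleven; omega
  have hdec : ∀ i : Fin n, ∃ p s t, (α i).toWord = p ++ t ∧
      (α ⟨(i.1 + 1) % n, Nat.mod_lt _ hn0⟩).toWord = FreeGroup.invRev t ++ s ∧
      FreeGroup.reduce ((α i).toWord ++ (α ⟨(i.1 + 1) % n, Nat.mod_lt _ hn0⟩).toWord)
        = p ++ s :=
    fun i => CancelAux.decomp (α i).toWord.length _ _ le_rfl
      (CancelAux.chain'_toWord _) (CancelAux.chain'_toWord _)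
  choose p s t h1 h2 h3 using hdec
  have htoW : ∀ i : Fin n,
      (α i * α ⟨(i.1 + 1) % n, Nat.mod_lt _ hn0⟩).toWord = p i ++ s i := by
    intro i
    have : α i * α ⟨(i.1 + 1) % n, Nat.mod_lt _ hn0⟩ =
        FreeGroup.mk ((α i).toWord ++ (α ⟨(i.1 + 1) % n, Nat.mod_lt _ hn0⟩).toWord) := by
      rw [← FreeGroup.mul_mk, FreeGroup.mk_toWord, FreeGroup.mk_toWord]
    rw [this, FreeGroup.toWord_mk, h3]
  have hpl : ∀ i : Fin n, (p i).length + (t i).length = l := by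
    intro i
    have := congrArg List.length (h1 i)
    simp only [List.length_append, hlen] at this
    omega
  have hsl : ∀ i : Fin n, (t i).length + (s i).length = l := by
    intro i
    have := congrArg List.length (h2 i)
    simp only [List.length_append, FreeGroup.invRev_length, hlen] at this
    omega
  have htk : ∀ i : Fin n, (t i).length = k := by
    intro i
    have hki : (2 * l -
        (α i * α ⟨(i.1 + 1) % n, Nat.mod_lt _ hn0⟩).toWord.length) / 2 = k := hk i
    rw [htoW i, List.length_append] at hki
    have := hpl i
    have := hsl i
    omega
  -- package for main_claim with ℕ-indexed data
  have hfin : ∀ i (hi : i + 1 < n),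
      (⟨(i + 1) % n, Nat.mod_lt _ hn0⟩ : Fin n) = ⟨i + 1, hi⟩ := by
    intro i hi
    apply Fin.ext
    show (i + 1) % n = i + 1
    exact Nat.mod_eq_of_lt hi
  obtain ⟨c, hc⟩ := CancelAux.main_claim (n := n) (l := l) (k := k) α
    (fun i => if h : i < n then p ⟨i, h⟩ else [])
    (fun i => if h : i < n then s ⟨i, h⟩ else [])
    (fun i => if h : i < n then t ⟨i, h⟩ else [])
    (by omega)
    (fun i hi => by simp only [hi, dif_pos]; exact h1 ⟨i, hi⟩)
    (fun i hi => by
      have hi' : i < n := by omega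
      simp only [hi', dif_pos]
      have := h2 ⟨i, hi'⟩
      rwa [hfin i hi] at this)
    (fun i hi => by
      have hi' : i < n := by omega
      simp only [hi', dif_pos]
      have := h3 ⟨i, hi'⟩
      rwa [hfin i hi] at this)
    (fun i hi => by simp only [hi, dif_pos]; exact hpl ⟨i, hi⟩)
    (fun i hi => by
      have hi' : i < n := by omega
      simp only [hi', dif_pos]; exact htk ⟨i, hi'⟩)
    n hn le_rfl
  have htake : (List.ofFn α).take n = List.ofFn α :=
    List.take_of_length_le (by simp)
  rw [htake, hprod, FreeGroup.toWord_one] at hc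
  have hclen := congrArg List.length hc
  have hn2 : n - 2 < n := by omega
  simp only [List.length_nil, List.length_append, hn2, dif_pos] at hclen
  have hs2 := hsl ⟨n - 2, hn2⟩
  have ht2 := htk ⟨n - 2, hn2⟩
  omega
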